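/- Let b ≥ 1 be a natural number and let G : ℕ → ℕ satisfy G(0) = 0, G(1) = 1, and G(n+2) = b·G(n+1) + G(n) for all n. Then G is cobweb-admissible: for all 0 ≤ k ≤ n, (∏_{i=1}^{k} G(i))·(∏_{i=1}^{n-k} G(i)) divides ∏_{i=1}^{n} G(i). -/

import Mathlib

/-- The sequence `G` with `G 0 = 0`, `G 1 = 1` and `G (n+2) = b·G (n+1) + G n` (`b ≥ 1`)
is cobweb-admissible. -/
theorem gen_fib_cobweb_admissible (b : ℕ) (hb : 1 ≤ b) (G : ℕ → ℕ)
    (h0 : G 0 = 0) (h1 : G 1 = 1) (hrec : ∀ n, G (n + 2) = b * G (n + 1) + G n) :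
    ∀ n k : ℕ, k ≤ n →
      (∏ i ∈ Finset.Icc 1 k, G i) * (∏ i ∈ Finset.Icc 1 (n - k), G i) ∣
        ∏ i ∈ Finset.Icc 1 n, G i := by
  -- addition formula
  have hadd : ∀ n m, G (m + n + 1) = G (m + 1) * G (n + 1) + G m * G n := by
    intro n
    induction n using Nat.twoStepInduction with
    | zero => intro m; simp [h0, h1]
    | one =>
      intro m
      have h2 : G 2 = b := by rw [show (2:ℕ) = 0 + 2 by rfl, hrec, h0, h1]; ring
      rw [show m + 1 + 1 = m + 2 by ring, hrec, h2, h1]; ring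
    | more n ih1 ih2 =>
      intro m
      have e1 : G (m + (n + 2) + 1) = b * G (m + (n + 1) + 1) + G (m + n + 1) := by
        rw [show m + (n + 2) + 1 = (m + n + 1) + 2 by ring, hrec]
        ring_nf
      rw [e1, ih1 m, ih2 m, show n + 2 + 1 = (n + 1) + 2 by ring, hrec (n+1),
        show n + 1 + 1 = n + 2 by ring, hrec n]
      ring
  intro n
  induction n with
  | zero =>
    intro k hk
    interval_cases k
    simp
  | succ n ih =>
    intro k hk
    rcases Nat.eq_zero_or_pos k with rfl | hk0
    · simp
    rcases eq_or_lt_of_le hk with rfl | hkn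
    · simp
    · have hk' : k ≤ n := Nat.lt_succ_iff.mp hkn
      have htop : ∏ i ∈ Finset.Icc 1 (n + 1), G i
          = G (n + 1) * ∏ i ∈ Finset.Icc 1 n, G i := by
        rw [Finset.prod_Icc_succ_top (by omega : 1 ≤ n + 1)]
        ring
      have hG : G (n + 1) = G (k + 1) * G (n - k + 1) + G k * G (n - k) := by
        have := hadd (n - k) k
        rwa [show k + (n - k) + 1 = n + 1 by omega] at this
      have hP1 : ∏ i ∈ Finset.Icc 1 (n - k + 1), G i
          = G (n - k + 1) * ∏ i ∈ Finset.Icc 1 (n - k), G i := by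
        rw [Finset.prod_Icc_succ_top (by omega : 1 ≤ n - k + 1)]
        ring
      have hPk : ∏ i ∈ Finset.Icc 1 k, G i
          = G k * ∏ i ∈ Finset.Icc 1 (k - 1), G i := by
        rw [show k = (k - 1) + 1 by omega]
        rw [Finset.prod_Icc_succ_top (by omega : 1 ≤ k - 1 + 1)]
        rw [show k - 1 + 1 - 1 = k - 1 by omega]
        ring
      rw [show n + 1 - k = n - k + 1 by omega, htop, hG, add_mul]
      apply dvd_add
      · rw [hP1]
        have := ih k hk'
        calc (∏ i ∈ Finset.Icc 1 k, G i) *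
              (G (n - k + 1) * ∏ i ∈ Finset.Icc 1 (n - k), G i)
            = G (n - k + 1) * ((∏ i ∈ Finset.Icc 1 k, G i) *
              ∏ i ∈ Finset.Icc 1 (n - k), G i) := by ring
          _ ∣ G (n - k + 1) * ∏ i ∈ Finset.Icc 1 n, G i := mul_dvd_mul_left _ this
          _ ∣ G (k + 1) * G (n - k + 1) * ∏ i ∈ Finset.Icc 1 n, G i :=
              ⟨G (k + 1), by ring⟩
      · rw [hPk]
        have := ih (k - 1) (by omega)
        rw [show n - (k - 1) = n - k + 1 by omega] at this
        calc G k * (∏ i ∈ Finset.Icc 1 (k - 1), G i) *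
              ∏ i ∈ Finset.Icc 1 (n - k + 1), G i
            = G k * ((∏ i ∈ Finset.Icc 1 (k - 1), G i) *
              ∏ i ∈ Finset.Icc 1 (n - k + 1), G i) := by ring
          _ ∣ G k * ∏ i ∈ Finset.Icc 1 n, G i := mul_dvd_mul_left _ this
          _ ∣ G k * G (n - k) * ∏ i ∈ Finset.Icc 1 n, G i :=
              ⟨G (n - k), by ring⟩
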